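/- Let T : V → W be a linear transformation between hypervector spaces (T(x+y) = T(x)+T(y) and T(a∘x) ⊆ a∘T(x)) and f : A → B a function. If (G,B) is a bipolar fuzzy soft hypervector space of W, then the preimage (T⁻¹(G), A), defined by T⁻¹(G)⁺ₑ(x) = G⁺_{f(e)}(T(x)) and T⁻¹(G)⁻ₑ(x) = G⁻_{f(e)}(T(x)), is a bipolar fuzzy soft hypervector space of V. -/

import Mathlib

/-- A hypervector space over a field `K`: an abelian group `V` with an external
hyperoperation `smul : K → V → Set V` satisfying axioms (H1)–(H5). -/
structure HVS (K V : Type*) [Field K] [AddCommGroup V] where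
  smul : K → V → Set V
  nonempty' : ∀ a x, (smul a x).Nonempty
  h1 : ∀ a x y, smul a (x + y) ⊆ Set.image2 (· + ·) (smul a x) (smul a y)
  h2 : ∀ a b x, smul (a + b) x ⊆ Set.image2 (· + ·) (smul a x) (smul b x)
  h3 : ∀ a b x, (⋃ t ∈ smul b x, smul a t) = smul (a * b) x
  h4a : ∀ a x, smul a (-x) = smul (-a) x
  h4b : ∀ a x, smul a (-x) = Neg.neg '' smul a x
  h5 : ∀ x, x ∈ smul 1 x

/-- `p, n` (the positive and negative membership functions of a bipolar fuzzy set)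
form a bipolar fuzzy subhyperspace of the hypervector space `H`. -/
def IsBFSub {K V : Type*} [Field K] [AddCommGroup V] (H : HVS K V)
    (p n : V → ℝ) : Prop :=
  (∀ x y, p (x - y) ≥ min (p x) (p y)) ∧
  (∀ x y, n (x - y) ≤ max (n x) (n y)) ∧
  (∀ a x, sInf (p '' H.smul a x) ≥ p x) ∧
  (∀ a x, sSup (n '' H.smul a x) ≤ n x)


/-- The preimage of a bipolar fuzzy soft hypervector space under a linear
transformation is a bipolar fuzzy soft hypervector space. -/
theorem stmt15 {K V W E₁ E₂ : Type*} [Field K] [AddCommGroup V] [AddCommGroup W]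
    (HV : HVS K V) (HW : HVS K W) (T : V → W) (f : E₁ → E₂)
    (hTadd : ∀ x y : V, T (x + y) = T x + T y)
    (hTsmul : ∀ (a : K) (x : V), T '' HV.smul a x ⊆ HW.smul a (T x))
    (A : Set E₁) (B : Set E₂) (hf : ∀ e ∈ A, f e ∈ B)
    (Gp Gn : E₂ → W → ℝ)
    (hGr : ∀ u ∈ B, ∀ y, Gp u y ∈ Set.Icc (0:ℝ) 1 ∧ Gn u y ∈ Set.Icc (-1:ℝ) 0)
    (hG : ∀ u ∈ B, IsBFSub HW (Gp u) (Gn u)) :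
    ∀ e ∈ A, IsBFSub HV (fun x => Gp (f e) (T x)) (fun x => Gn (f e) (T x)) := by
  intro e he
  have hu := hf e he
  obtain ⟨h1, h2, h3, h4⟩ := hG _ hu
  have hT0 : T 0 = 0 := by
    have := hTadd 0 0; simpa using this
  have hTneg : ∀ y, T (-y) = - T y := by
    intro y
    have := hTadd y (-y); rw [add_neg_cancel, hT0] at this
    exact (neg_eq_of_add_eq_zero_right this.symm).symm
  have hTsub : ∀ x y, T (x - y) = T x - T y := by
    intro x y
    rw [sub_eq_add_neg, hTadd, hTneg, sub_eq_add_neg]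
  refine ⟨fun x y => by simpa [hTsub] using h1 (T x) (T y),
          fun x y => by simpa [hTsub] using h2 (T x) (T y), ?_, ?_⟩
  · intro a x
    have hsub : (fun x => Gp (f e) (T x)) '' HV.smul a x ⊆ Gp (f e) '' HW.smul a (T x) := by
      rw [show ((fun x => Gp (f e) (T x)) '' HV.smul a x) = Gp (f e) '' (T '' HV.smul a x) by
        rw [← Set.image_comp]; rfl]
      exact Set.image_mono (hTsmul a x)
    have hne : ((fun x => Gp (f e) (T x)) '' HV.smul a x).Nonempty :=
      (HV.nonempty' a x).image _
    have hbdd : BddBelow (Gp (f e) '' HW.smul a (T x)) := by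
      refine ⟨0, ?_⟩
      rintro r ⟨y, _, rfl⟩
      exact (hGr _ hu y).1.1
    calc Gp (f e) (T x) ≤ sInf (Gp (f e) '' HW.smul a (T x)) := h3 a (T x)
      _ ≤ sInf ((fun x => Gp (f e) (T x)) '' HV.smul a x) := csInf_le_csInf hbdd hne hsub
  · intro a x
    have hsub : (fun x => Gn (f e) (T x)) '' HV.smul a x ⊆ Gn (f e) '' HW.smul a (T x) := by
      rw [show ((fun x => Gn (f e) (T x)) '' HV.smul a x) = Gn (f e) '' (T '' HV.smul a x) by
        rw [← Set.image_comp]; rfl]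
      exact Set.image_mono (hTsmul a x)
    have hne : ((fun x => Gn (f e) (T x)) '' HV.smul a x).Nonempty :=
      (HV.nonempty' a x).image _
    have hbdd : BddAbove (Gn (f e) '' HW.smul a (T x)) := by
      refine ⟨0, ?_⟩
      rintro r ⟨y, _, rfl⟩
      exact (hGr _ hu y).2.2
    calc sSup ((fun x => Gn (f e) (T x)) '' HV.smul a x)
        ≤ sSup (Gn (f e) '' HW.smul a (T x)) := csSup_le_csSup hbdd hne hsub
      _ ≤ Gn (f e) (T x) := h4 a (T x)
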